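/- For every integer k ≥ 2 there exists a constant C_k > 0 with the following property. Let D ≥ 1, let E : Fin D → ℝ satisfy the k-th no-resonance condition, let c : Fin D → ℂ with ∑_j |c_j|² = 1, and let a : Fin D → ℂ. Define p(t) = |∑_j a_j c_j exp(−i E_j t)|² and p_avg = ∑_j |a_j|² |c_j|², and assume p_avg > 0. Then the infinite-time average lim_{T→∞} (1/T) ∫₀^T p(t)^k dt exists and satisfies | lim_{T→∞} (1/T) ∫₀^T p(t)^k dt − k! · p_avg^k | ≤ C_k · p_avg^{k−2} · ∑_j |a_j|⁴ |c_j|⁴. -/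

import Mathlib

open Filter MeasureTheory

/-- The `k`-th no-resonance condition for a family of energy levels `E : Fin D → ℝ`. -/
def NoResonance (D k : ℕ) (E : Fin D → ℝ) : Prop :=
  ∀ α β : Fin k → Fin D, (∑ j, E (α j)) = (∑ j, E (β j)) →
    ∃ σ : Equiv.Perm (Fin k), β = α ∘ σ

lemma avg_exp_tendsto (ω : ℝ) :
    Tendsto (fun T : ℝ => ((1 / T : ℝ) : ℂ) *
        ∫ t in (0:ℝ)..T, Complex.exp (-(Complex.I * (ω : ℂ) * (t : ℂ))))
      atTop (nhds (if ω = 0 then 1 else 0)) := by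
  by_cases hω : ω = 0
  · subst hω
    rw [if_pos rfl]
    have hev : ∀ᶠ T : ℝ in atTop,
        ((1 / T : ℝ) : ℂ) * ∫ t in (0:ℝ)..T,
          Complex.exp (-(Complex.I * ((0:ℝ) : ℂ) * (t : ℂ))) = 1 := by
      filter_upwards [eventually_gt_atTop (0:ℝ)] with T hT
      simp only [Complex.ofReal_zero, mul_zero, zero_mul, neg_zero, Complex.exp_zero]
      rw [intervalIntegral.integral_const]
      rw [sub_zero, Complex.real_smul, mul_one, ← Complex.ofReal_mul,
        one_div, inv_mul_cancel₀ (ne_of_gt hT), Complex.ofReal_one]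
    exact Tendsto.congr' (hev.mono fun T hT => hT.symm) tendsto_const_nhds
  · rw [if_neg hω]
    set cc : ℂ := -(Complex.I * (ω : ℂ)) with hcc
    have hc0 : cc ≠ 0 := by
      simp [hcc, Complex.ext_iff, hω]
    have hint : ∀ T : ℝ, (∫ t in (0:ℝ)..T, Complex.exp (-(Complex.I * (ω : ℂ) * (t : ℂ))))
        = (Complex.exp (cc * T) - 1) / cc := by
      intro T
      have : ∀ t : ℝ, -(Complex.I * (ω : ℂ) * (t : ℂ)) = cc * (t : ℂ) := by
        intro t; rw [hcc]; ring
      simp_rw [this]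
      rw [integral_exp_mul_complex hc0]
      simp
    have hbound : ∀ᶠ T : ℝ in atTop,
        ‖((1 / T : ℝ) : ℂ) * ∫ t in (0:ℝ)..T,
            Complex.exp (-(Complex.I * (ω : ℂ) * (t : ℂ)))‖ ≤ (1 / T) * (2 / ‖cc‖) := by
      filter_upwards [eventually_gt_atTop (0:ℝ)] with T hT
      rw [hint T, norm_mul, norm_div, Complex.norm_real]
      have h1 : ‖Complex.exp (cc * T) - 1‖ ≤ 2 := by
        refine (norm_sub_le _ _).trans ?_
        have : ‖Complex.exp (cc * T)‖ = 1 := by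
          rw [Complex.norm_exp]
          have : (cc * T).re = 0 := by simp [hcc]
          rw [this, Real.exp_zero]
        rw [this, norm_one]; norm_num
      have : ‖(1 / T : ℝ)‖ = 1 / T := abs_of_pos (by positivity)
      rw [this]
      gcongr
    have hg : Tendsto (fun T : ℝ => (1 / T) * (2 / ‖cc‖)) atTop (nhds 0) := by
      have := tendsto_inv_atTop_zero (𝕜 := ℝ)
      have h2 := this.mul_const (2 / ‖cc‖)
      rw [zero_mul] at h2
      simpa [one_div] using h2
    exact squeeze_zero_norm' hbound hg

lemma sum_prod_eq_pow {D n : ℕ} (q : Fin D → ℝ) :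
    ∑ g : Fin n → Fin D, ∏ m, q (g m) = (∑ j, q j) ^ n :=
  (Fintype.sum_pow q n).symm

lemma pair_sum_eq {D : ℕ} (n : ℕ) (q : Fin D → ℝ)
    (i i' : Fin (n + 2)) (hii : i ≠ i') :
    ∑ α : Fin (n + 2) → Fin D, (if α i = α i' then ∏ m, q (α m) else 0)
      = (∑ j, q j ^ 2) * (∑ j, q j) ^ n := by
  have h01 : (0 : Fin (n + 2)) ≠ 1 := by
    intro h; exact absurd (congrArg Fin.val h) (by simp)
  set i'' : Fin (n + 2) := Equiv.swap 0 i i' with hi''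
  have hi''0 : i'' ≠ 0 := by
    intro h
    apply hii
    have := congrArg (Equiv.swap (0 : Fin (n+2)) i) h
    rw [hi'', Equiv.swap_apply_self, Equiv.swap_apply_left] at this
    exact this.symm
  set e : Equiv.Perm (Fin (n + 2)) := (Equiv.swap 1 i'').trans (Equiv.swap 0 i) with he
  have he0 : e 0 = i := by
    rw [he]
    simp only [Equiv.trans_apply]
    rw [Equiv.swap_apply_of_ne_of_ne h01 (Ne.symm hi''0), Equiv.swap_apply_left]
  have he1 : e 1 = i' := by
    rw [he]
    simp only [Equiv.trans_apply]
    rw [Equiv.swap_apply_left, hi'', Equiv.swap_apply_self]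
  have hre : ∑ α : Fin (n + 2) → Fin D, (if α i = α i' then ∏ m, q (α m) else 0)
      = ∑ β : Fin (n + 2) → Fin D, (if β 0 = β 1 then ∏ m, q (β m) else 0) := by
    refine Fintype.sum_bijective (fun α => α ∘ e)
      ((e.arrowCongr (Equiv.refl (Fin D))).symm.bijective) _ _ fun α => ?_
    simp only [Function.comp_apply, he0, he1]
    congr 1
    exact (Equiv.prod_comp e (fun m => q (α m))).symm
  rw [hre]
  have step : ∀ (m : ℕ) (F : (Fin (m + 1) → Fin D) → ℝ),
      ∑ β : Fin (m + 1) → Fin D, F β = ∑ x : Fin D, ∑ g : Fin m → Fin D, F (Fin.cons x g) := by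
    intro m F
    exact ((Fintype.sum_equiv (Fin.consEquiv fun _ => Fin D)
      (fun p => F (Fin.cons p.1 p.2)) F fun p => rfl).symm).trans (Fintype.sum_prod_type _)
  rw [step (n+1)]
  have inner : ∀ x : Fin D,
      (∑ g : Fin (n+1) → Fin D, (if (Fin.cons x g : Fin (n+2) → Fin D) 0 = (Fin.cons x g : Fin (n+2) → Fin D) 1
          then ∏ m, q ((Fin.cons x g : Fin (n+2) → Fin D) m) else 0))
        = q x ^ 2 * (∑ j, q j) ^ n := by
    intro x
    rw [step n]
    have : ∀ (y : Fin D) (g : Fin n → Fin D),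
        (if (Fin.cons x (Fin.cons y g) : Fin (n+2) → Fin D) 0 = (Fin.cons x (Fin.cons y g) : Fin (n+2) → Fin D) 1
          then ∏ m, q ((Fin.cons x (Fin.cons y g) : Fin (n+2) → Fin D) m) else 0)
        = if x = y then q x * (q y * ∏ m, q (g m)) else 0 := by
      intro y g
      have hc0 : (Fin.cons x (Fin.cons y g) : Fin (n+2) → Fin D) 0 = x := rfl
      have hc1 : (Fin.cons x (Fin.cons y g) : Fin (n+2) → Fin D) 1 = y := rfl
      rw [hc0, hc1]
      by_cases hxy : x = y
      · rw [if_pos hxy, if_pos hxy]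
        rw [Fin.prod_univ_succ, Fin.prod_univ_succ]
        simp [Fin.cons_succ]
      · rw [if_neg hxy, if_neg hxy]
    simp_rw [this]
    rw [Finset.sum_comm]
    have : ∀ g : Fin n → Fin D,
        ∑ y : Fin D, (if x = y then q x * (q y * ∏ m, q (g m)) else 0)
          = q x ^ 2 * ∏ m, q (g m) := by
      intro g
      rw [Finset.sum_ite_eq (Finset.univ : Finset (Fin D)) x
        (fun y => q x * (q y * ∏ m, q (g m)))]
      rw [if_pos (Finset.mem_univ x)]
      ring
    simp_rw [this]
    rw [← Finset.mul_sum, sum_prod_eq_pow]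
  simp_rw [inner]
  rw [← Finset.sum_mul]

/-- Porter–Thomas statistics of the outcome probabilities over time: for every `k ≥ 2`
there is a constant `C_k > 0` such that the infinite-time average of `p(t)^k` exists and
is within `C_k p_avg^{k-2} ∑ⱼ |aⱼ|⁴|cⱼ|⁴` of `k! p_avg^k`. -/
theorem outcome_probability_porter_thomas_moments (k : ℕ) (hk : 2 ≤ k) :
    ∃ C : ℝ, 0 < C ∧
      ∀ (D : ℕ), 1 ≤ D → ∀ (E : Fin D → ℝ), NoResonance D k E →
      ∀ (c a : Fin D → ℂ), (∑ j, Complex.normSq (c j)) = 1 →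
      0 < (∑ j, Complex.normSq (a j) * Complex.normSq (c j)) →
      ∃ L : ℝ,
        Tendsto
          (fun T : ℝ => (1 / T) *
            ∫ t in (0:ℝ)..T,
              (Complex.normSq
                (∑ j, a j * c j * Complex.exp (-(Complex.I * (E j : ℂ) * (t : ℂ))))) ^ k)
          atTop (nhds L) ∧
        |L - (k.factorial : ℝ) * (∑ j, Complex.normSq (a j) * Complex.normSq (c j)) ^ k| ≤
          C * (∑ j, Complex.normSq (a j) * Complex.normSq (c j)) ^ (k - 2) *
            ∑ j, (Complex.normSq (a j)) ^ 2 * (Complex.normSq (c j)) ^ 2 := by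
  classical
  obtain ⟨n, rfl⟩ : ∃ n, k = n + 2 := ⟨k - 2, by omega⟩
  refine ⟨((n+2).factorial : ℝ) * ((n:ℝ)+2)^2,
    mul_pos (by exact_mod_cast (n+2).factorial_pos) (by positivity), ?_⟩
  intro D hD E hE c a hc hp
  let b : Fin D → ℂ := fun j => a j * c j
  let q : Fin D → ℝ := fun j => Complex.normSq (a j) * Complex.normSq (c j)
  have hq : ∀ j, Complex.normSq (b j) = q j := fun j => Complex.normSq_mul _ _
  have hq0 : ∀ j, 0 ≤ q j := fun j =>
    mul_nonneg (Complex.normSq_nonneg _) (Complex.normSq_nonneg _)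
  let f : ℝ → ℂ := fun t => ∑ j, b j * Complex.exp (-(Complex.I * (E j : ℂ) * (t : ℂ)))
  let coef : (Fin (n+2) → Fin D) → (Fin (n+2) → Fin D) → ℂ :=
    fun α β => (∏ i, b (α i)) * ∏ i, (starRingEnd ℂ) (b (β i))
  let ω : (Fin (n+2) → Fin D) → (Fin (n+2) → Fin D) → ℝ :=
    fun α β => (∑ i, E (α i)) - ∑ i, E (β i)
  let G : ℝ → ℂ := fun t => ∑ α : Fin (n+2) → Fin D, ∑ β : Fin (n+2) → Fin D,
    coef α β * Complex.exp (-(Complex.I * ((ω α β : ℝ) : ℂ) * (t : ℂ)))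
  -- pointwise expansion
  have hpow : ∀ (v : Fin D → ℂ) (w : Fin D → ℝ) (t : ℝ),
      (∑ j, v j * Complex.exp (-(Complex.I * (w j : ℂ) * (t : ℂ)))) ^ (n+2)
        = ∑ α : Fin (n+2) → Fin D, (∏ i, v (α i)) *
            Complex.exp (-(Complex.I * ((∑ i, w (α i) : ℝ) : ℂ) * (t : ℂ))) := by
    intro v w t
    rw [Fintype.sum_pow]
    refine Finset.sum_congr rfl fun α _ => ?_
    rw [Finset.prod_mul_distrib, ← Complex.exp_sum]
    congr 1
    push_cast
    rw [Finset.mul_sum, Finset.sum_mul, ← Finset.sum_neg_distrib]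
  have hconj : ∀ t : ℝ, (starRingEnd ℂ) (f t)
      = ∑ j, (starRingEnd ℂ) (b j) * Complex.exp (-(Complex.I * ((-(E j) : ℝ) : ℂ) * (t : ℂ))) := by
    intro t
    rw [map_sum]
    refine Finset.sum_congr rfl fun j _ => ?_
    rw [map_mul, ← Complex.exp_conj]
    congr 1
    simp only [map_neg, map_mul, Complex.conj_I, Complex.conj_ofReal, Complex.ofReal_neg]
    ring
  have hfG : ∀ t : ℝ, ((Complex.normSq (f t) ^ (n+2) : ℝ) : ℂ) = G t := by
    intro t
    have hmc : ((Complex.normSq (f t) ^ (n+2) : ℝ) : ℂ)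
        = (f t) ^ (n+2) * ((starRingEnd ℂ) (f t)) ^ (n+2) := by
      rw [← mul_pow, Complex.mul_conj]
      push_cast
      ring
    rw [hmc, hpow b E t, hconj t, hpow (fun j => (starRingEnd ℂ) (b j)) (fun j => -(E j)) t,
      Finset.sum_mul_sum]
    refine Finset.sum_congr rfl fun α _ => Finset.sum_congr rfl fun β _ => ?_
    rw [mul_mul_mul_comm, ← Complex.exp_add]
    refine congrArg₂ (· * ·) rfl (congrArg Complex.exp ?_)
    show (-(Complex.I * ((∑ i, E (α i) : ℝ) : ℂ) * (t : ℂ))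
        + -(Complex.I * ((∑ i, -(E (β i)) : ℝ) : ℂ) * (t : ℂ)))
      = -(Complex.I * (((∑ i, E (α i)) - ∑ i, E (β i) : ℝ) : ℂ) * (t : ℂ))
    push_cast
    rw [Finset.sum_neg_distrib]
    ring
  have hcont1 : ∀ ωr : ℝ, Continuous (fun t : ℝ =>
      Complex.exp (-(Complex.I * (ωr : ℂ) * (t : ℂ)))) := by
    intro ωr
    exact Complex.continuous_exp.comp
      (((continuous_const.mul Complex.continuous_ofReal)).neg)
  have hGcont : Continuous G := by
    refine continuous_finset_sum _ fun α _ => continuous_finset_sum _ fun β _ => ?_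
    exact continuous_const.mul (hcont1 _)
  have hGint : ∀ T : ℝ, IntervalIntegrable G volume 0 T :=
    fun T => hGcont.intervalIntegrable _ _
  let Lc : ℂ := ∑ α : Fin (n+2) → Fin D, ∑ β : Fin (n+2) → Fin D,
    coef α β * (if ω α β = 0 then 1 else 0)
  have hTend : Tendsto (fun T : ℝ => ((1/T : ℝ) : ℂ) * ∫ t in (0:ℝ)..T, G t)
      atTop (nhds Lc) := by
    have hrw : ∀ T : ℝ, ((1/T : ℝ) : ℂ) * ∫ t in (0:ℝ)..T, G t
        = ∑ α : Fin (n+2) → Fin D, ∑ β : Fin (n+2) → Fin D,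
            coef α β * (((1/T : ℝ) : ℂ) *
              ∫ t in (0:ℝ)..T, Complex.exp (-(Complex.I * ((ω α β : ℝ) : ℂ) * (t : ℂ)))) := by
      intro T
      have hG1 : (∫ t in (0:ℝ)..T, G t) = ∑ α : Fin (n+2) → Fin D, ∑ β : Fin (n+2) → Fin D,
          coef α β * ∫ t in (0:ℝ)..T,
            Complex.exp (-(Complex.I * ((ω α β : ℝ) : ℂ) * (t : ℂ))) := by
        show (∫ t in (0:ℝ)..T, ∑ α : Fin (n+2) → Fin D, ∑ β : Fin (n+2) → Fin D,
          coef α β * Complex.exp (-(Complex.I * ((ω α β : ℝ) : ℂ) * (t : ℂ)))) = _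
        have hii : ∀ α ∈ (Finset.univ : Finset (Fin (n+2) → Fin D)),
            IntervalIntegrable (fun t : ℝ => ∑ β : Fin (n+2) → Fin D,
              coef α β * Complex.exp (-(Complex.I * ((ω α β : ℝ) : ℂ) * (t : ℂ))))
              volume 0 T := fun α _ =>
          (continuous_finset_sum _ fun β _ =>
            continuous_const.mul (hcont1 _)).intervalIntegrable 0 T
        rw [intervalIntegral.integral_finset_sum hii]
        refine Finset.sum_congr rfl fun α _ => ?_
        have hii2 : ∀ β ∈ (Finset.univ : Finset (Fin (n+2) → Fin D)),
            IntervalIntegrable (fun t : ℝ =>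
              coef α β * Complex.exp (-(Complex.I * ((ω α β : ℝ) : ℂ) * (t : ℂ))))
              volume 0 T := fun β _ =>
          (continuous_const.mul (hcont1 _)).intervalIntegrable 0 T
        rw [intervalIntegral.integral_finset_sum hii2]
        exact Finset.sum_congr rfl fun β _ => intervalIntegral.integral_const_mul _ _
      rw [hG1, Finset.mul_sum]
      refine Finset.sum_congr rfl fun α _ => ?_
      rw [Finset.mul_sum]
      exact Finset.sum_congr rfl fun β _ => by ring
    refine Tendsto.congr (fun T => (hrw T).symm) ?_
    exact tendsto_finset_sum _ fun α _ => tendsto_finset_sum _ fun β _ =>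
      (avg_exp_tendsto (ω α β)).const_mul _
  refine ⟨Lc.re, ?_, ?_⟩
  · refine Tendsto.congr (fun T => ?_) ((Complex.continuous_re.tendsto Lc).comp hTend)
    show (((1/T : ℝ) : ℂ) * ∫ t in (0:ℝ)..T, G t).re
      = (1 / T) * ∫ t in (0:ℝ)..T, (Complex.normSq (f t)) ^ (n+2)
    rw [Complex.re_ofReal_mul]
    congr 1
    have h1 := (Complex.reCLM.intervalIntegral_comp_comm (μ := volume) (hGint T)).symm
    calc (∫ t in (0:ℝ)..T, G t).re
        = ∫ t in (0:ℝ)..T, (G t).re := by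
          simpa [Complex.reCLM_apply] using h1
      _ = ∫ t in (0:ℝ)..T, (Complex.normSq (f t)) ^ (n+2) := by
          refine intervalIntegral.integral_congr fun t _ => ?_
          rw [← hfG t, Complex.ofReal_re]
  · -- the bound
    set N : (Fin (n+2) → Fin D) → ℕ :=
      fun α => (Finset.univ.filter fun β : Fin (n+2) → Fin D =>
        (∑ i, E (α i)) = ∑ i, E (β i)).card with hN
    have hQcoef : ∀ α : Fin (n+2) → Fin D, ∀ β ∈ (Finset.univ.filter fun β : Fin (n+2) → Fin D =>
        (∑ i, E (α i)) = ∑ i, E (β i)), coef α β = ((∏ i, q (α i) : ℝ) : ℂ) := by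
      intro α β hβ
      obtain ⟨σ, rfl⟩ := hE α β (Finset.mem_filter.mp hβ).2
      show (∏ i, b (α i)) * (∏ i, (starRingEnd ℂ) (b ((α ∘ σ) i))) = _
      rw [show (∏ i, (starRingEnd ℂ) (b ((α ∘ σ) i))) = ∏ i, (starRingEnd ℂ) (b (α i)) from
        Equiv.prod_comp σ fun i => (starRingEnd ℂ) (b (α i))]
      rw [← Finset.prod_mul_distrib, Complex.ofReal_prod]
      refine Finset.prod_congr rfl fun i _ => ?_
      rw [Complex.mul_conj]
      exact congrArg _ (hq (α i))
    have hLc : Lc = ((∑ α : Fin (n+2) → Fin D, (N α : ℝ) * ∏ i, q (α i) : ℝ) : ℂ) := by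
      rw [Complex.ofReal_sum]
      refine Finset.sum_congr rfl fun α _ => ?_
      have : ∀ β : Fin (n+2) → Fin D, coef α β * (if ω α β = 0 then 1 else 0)
          = if (∑ i, E (α i)) = ∑ i, E (β i) then coef α β else 0 := by
        intro β
        rw [mul_ite, mul_one, mul_zero]
        exact if_congr sub_eq_zero rfl rfl
      rw [show (∑ β : Fin (n+2) → Fin D, coef α β * (if ω α β = 0 then 1 else 0))
          = ∑ β : Fin (n+2) → Fin D, if (∑ i, E (α i)) = ∑ i, E (β i) then coef α β else 0
        from Finset.sum_congr rfl fun β _ => this β]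
      rw [← Finset.sum_filter]
      rw [Finset.sum_congr rfl (hQcoef α), Finset.sum_const]
      have hcard : (Finset.univ.filter fun β : Fin (n+2) → Fin D =>
          (∑ i, E (α i)) = ∑ i, E (β i)).card = N α := rfl
      rw [hcard, nsmul_eq_mul]
      push_cast
      ring
    have hLcre : Lc.re = ∑ α : Fin (n+2) → Fin D, (N α : ℝ) * ∏ i, q (α i) := by
      rw [hLc, Complex.ofReal_re]
    have hNle : ∀ α, N α ≤ (n+2).factorial := by
      intro α
      have hsub : (Finset.univ.filter fun β : Fin (n+2) → Fin D =>
          (∑ i, E (α i)) = ∑ i, E (β i)) ⊆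
          Finset.univ.image (fun σ : Equiv.Perm (Fin (n+2)) => α ∘ σ) := by
        intro β hβ
        obtain ⟨σ, rfl⟩ := hE α β (Finset.mem_filter.mp hβ).2
        exact Finset.mem_image.mpr ⟨σ, Finset.mem_univ _, rfl⟩
      calc N α ≤ (Finset.univ.image (fun σ : Equiv.Perm (Fin (n+2)) => α ∘ σ)).card :=
            Finset.card_le_card hsub
        _ ≤ (Finset.univ : Finset (Equiv.Perm (Fin (n+2)))).card := Finset.card_image_le
        _ = (n+2).factorial := by rw [Finset.card_univ, Fintype.card_perm, Fintype.card_fin]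
    have hNinj : ∀ α : Fin (n+2) → Fin D, Function.Injective α → N α = (n+2).factorial := by
      intro α hα
      refine le_antisymm (hNle α) ?_
      have himg : Finset.univ.image (fun σ : Equiv.Perm (Fin (n+2)) => α ∘ σ) ⊆
          Finset.univ.filter fun β : Fin (n+2) → Fin D => (∑ i, E (α i)) = ∑ i, E (β i) := by
        intro β hβ
        obtain ⟨σ, _, rfl⟩ := Finset.mem_image.mp hβ
        refine Finset.mem_filter.mpr ⟨Finset.mem_univ _, ?_⟩
        exact (Equiv.sum_comp σ fun i => E (α i)).symm
      have hinj : Function.Injective (fun σ : Equiv.Perm (Fin (n+2)) => α ∘ σ) := by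
        intro σ σ' h
        exact Equiv.ext fun i => hα (congrFun h i)
      calc (n+2).factorial = (Finset.univ : Finset (Equiv.Perm (Fin (n+2)))).card := by
            rw [Finset.card_univ, Fintype.card_perm, Fintype.card_fin]
        _ = (Finset.univ.image (fun σ : Equiv.Perm (Fin (n+2)) => α ∘ σ)).card :=
            (Finset.card_image_of_injective _ hinj).symm
        _ ≤ N α := Finset.card_le_card himg
    -- now bound
    have hQnn : ∀ α : Fin (n+2) → Fin D, 0 ≤ ∏ i, q (α i) :=
      fun α => Finset.prod_nonneg fun i _ => hq0 _
    have hterm : ∀ α : Fin (n+2) → Fin D,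
        |(N α : ℝ) - (n+2).factorial| * ∏ i, q (α i) ≤
          ((n+2).factorial : ℝ) * ∑ pr ∈ (Finset.univ : Finset (Fin (n+2))).offDiag,
            (if α pr.1 = α pr.2 then ∏ i, q (α i) else 0) := by
      intro α
      have hsumnn : 0 ≤ ∑ pr ∈ (Finset.univ : Finset (Fin (n+2))).offDiag,
          (if α pr.1 = α pr.2 then ∏ i, q (α i) else 0) :=
        Finset.sum_nonneg fun pr _ => by
          by_cases h : α pr.1 = α pr.2
          · rw [if_pos h]; exact hQnn α
          · rw [if_neg h]
      by_cases hα : Function.Injective α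
      · rw [hNinj α hα, sub_self, abs_zero, zero_mul]
        exact mul_nonneg (by positivity) hsumnn
      · obtain ⟨i, i', hval, hne⟩ := Function.not_injective_iff.mp hα
        have hle : (N α : ℝ) ≤ ((n+2).factorial : ℝ) := by exact_mod_cast hNle α
        have hNnn : (0:ℝ) ≤ (N α : ℝ) := Nat.cast_nonneg _
        have h1 : |(N α : ℝ) - (n+2).factorial| ≤ ((n+2).factorial : ℝ) := by
          rw [abs_of_nonpos (by linarith)]
          linarith
        have h2 : ∏ i, q (α i) ≤ ∑ pr ∈ (Finset.univ : Finset (Fin (n+2))).offDiag,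
            (if α pr.1 = α pr.2 then ∏ i, q (α i) else 0) := by
          have := Finset.single_le_sum
            (f := fun pr : Fin (n+2) × Fin (n+2) => if α pr.1 = α pr.2 then ∏ i, q (α i) else 0)
            (fun pr _ => by
              by_cases h : α pr.1 = α pr.2
              · rw [if_pos h]; exact hQnn α
              · rw [if_neg h])
            (show (i, i') ∈ (Finset.univ : Finset (Fin (n+2))).offDiag from
              Finset.mem_offDiag.mpr ⟨Finset.mem_univ _, Finset.mem_univ _, hne⟩)
          simpa [hval] using this
        calc |(N α : ℝ) - (n+2).factorial| * ∏ i, q (α i)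
            ≤ ((n+2).factorial : ℝ) * ∏ i, q (α i) :=
              mul_le_mul_of_nonneg_right h1 (hQnn α)
          _ ≤ _ := mul_le_mul_of_nonneg_left h2 (by positivity)
    have hpair : ∀ pr ∈ (Finset.univ : Finset (Fin (n+2))).offDiag,
        (∑ α : Fin (n+2) → Fin D, if α pr.1 = α pr.2 then ∏ m, q (α m) else 0)
          = (∑ j, q j ^ 2) * (∑ j, q j) ^ n := fun pr hpr =>
      pair_sum_eq n q pr.1 pr.2 (Finset.mem_offDiag.mp hpr).2.2
    have hmain : |Lc.re - ((n+2).factorial : ℝ) * (∑ j, q j) ^ (n+2)| ≤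
        ((n+2).factorial : ℝ) * (((n:ℝ)+2)^2 * ((∑ j, q j ^ 2) * (∑ j, q j) ^ n)) := by
      rw [hLcre, Fintype.sum_pow q (n+2), Finset.mul_sum, ← Finset.sum_sub_distrib]
      have habs : |∑ α : Fin (n+2) → Fin D,
          ((N α : ℝ) * ∏ i, q (α i) - ((n+2).factorial : ℝ) * ∏ i, q (α i))| ≤
          ∑ α : Fin (n+2) → Fin D, |(N α : ℝ) - (n+2).factorial| * ∏ i, q (α i) := by
        refine (Finset.abs_sum_le_sum_abs _ _).trans ?_
        refine Finset.sum_le_sum fun α _ => ?_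
        rw [← sub_mul, abs_mul, abs_of_nonneg (hQnn α)]
      refine habs.trans ?_
      calc ∑ α : Fin (n+2) → Fin D, |(N α : ℝ) - (n+2).factorial| * ∏ i, q (α i)
          ≤ ∑ α : Fin (n+2) → Fin D, ((n+2).factorial : ℝ) *
              ∑ pr ∈ (Finset.univ : Finset (Fin (n+2))).offDiag,
                (if α pr.1 = α pr.2 then ∏ i, q (α i) else 0) :=
            Finset.sum_le_sum fun α _ => hterm α
        _ = ((n+2).factorial : ℝ) * ∑ pr ∈ (Finset.univ : Finset (Fin (n+2))).offDiag,
              ∑ α : Fin (n+2) → Fin D, (if α pr.1 = α pr.2 then ∏ i, q (α i) else 0) := by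
            rw [← Finset.mul_sum, Finset.sum_comm]
        _ = ((n+2).factorial : ℝ) * ∑ pr ∈ (Finset.univ : Finset (Fin (n+2))).offDiag,
              ((∑ j, q j ^ 2) * (∑ j, q j) ^ n) := by
            rw [Finset.sum_congr rfl hpair]
        _ ≤ _ := by
            rw [Finset.sum_const, nsmul_eq_mul]
            have hcard : (((Finset.univ : Finset (Fin (n+2))).offDiag.card : ℝ)) ≤ ((n:ℝ)+2)^2 := by
              rw [Finset.offDiag_card]
              have : (Finset.univ : Finset (Fin (n+2))).card = n + 2 := by
                rw [Finset.card_univ, Fintype.card_fin]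
              rw [this]
              push_cast [Nat.cast_sub (by nlinarith : n + 2 ≤ (n+2) * (n+2))]
              nlinarith
            have hnn : 0 ≤ (∑ j, q j ^ 2) * (∑ j, q j) ^ n := by
              apply mul_nonneg
              · exact Finset.sum_nonneg fun j _ => sq_nonneg _
              · exact pow_nonneg (Finset.sum_nonneg fun j _ => hq0 j) n
            have := mul_le_mul_of_nonneg_right hcard hnn
            exact mul_le_mul_of_nonneg_left this (Nat.cast_nonneg _)
    -- convert to the required form
    have hexp : (n + 2) - 2 = n := by omega
    calc |Lc.re - ((n+2).factorial : ℝ) * (∑ j, Complex.normSq (a j) * Complex.normSq (c j)) ^ (n+2)|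
        = |Lc.re - ((n+2).factorial : ℝ) * (∑ j, q j) ^ (n+2)| := rfl
      _ ≤ ((n+2).factorial : ℝ) * (((n:ℝ)+2)^2 * ((∑ j, q j ^ 2) * (∑ j, q j) ^ n)) := hmain
      _ = ((n+2).factorial : ℝ) * ((n:ℝ)+2)^2 *
            (∑ j, Complex.normSq (a j) * Complex.normSq (c j)) ^ ((n+2) - 2) *
            ∑ j, (Complex.normSq (a j)) ^ 2 * (Complex.normSq (c j)) ^ 2 := by
          rw [hexp]
          have hq2 : (∑ j, q j ^ 2) = ∑ j, (Complex.normSq (a j)) ^ 2 * (Complex.normSq (c j)) ^ 2 :=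
            Finset.sum_congr rfl fun j _ => mul_pow _ _ _
          rw [hq2]
          ring
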